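/- Every shell of the D₄ lattice decomposes into orthogonal transformations of the D₄ root system: for every positive integer m there exist finitely many linear isometries σ₁, …, σ_k of ℝ⁴ such that the normalized shell (1/√(2m))(D₄)_{2m} ⊆ S³ is the disjoint union of the sets σ₁((1/√2)(D₄)₂), …, σ_k((1/√2)(D₄)₂). -/

import Mathlib

/-- The shell `{x ∈ ℤ^d : x₁² + ⋯ + x_d² = n}` as a `Finset`.  (The bounding box
`Finset.Icc` is harmless: any integer solution satisfies `|x i| ≤ x i ^ 2 ≤ n`.) -/
noncomputable def intShell (d n : ℕ) : Finset (Fin d → ℤ) :=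
  (Finset.Icc (fun _ => -(n : ℤ)) (fun _ => (n : ℤ))).filter
    (fun x => ∑ i, x i ^ 2 = (n : ℤ))

/-- The normalized shell `(1/√n)·{x ∈ ℤ^d : ∑ xᵢ² = n} ⊆ S^{d-1}`.  For `n = 2`, `d = 4`,
this is the normalized `D₄` root system `(1/√2)·(D₄)₂`. -/
def normShell (d n : ℕ) : Set (EuclideanSpace ℝ (Fin d)) :=
  {x | ∃ y ∈ intShell d n, ∀ i, x i = (y i : ℝ) / Real.sqrt n}

namespace D4aux

open Quaternion

/-! ### Integer quaternion arithmetic -/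

/-- Quaternion multiplication on integer 4-vectors. -/
def qmul (x w : Fin 4 → ℤ) : Fin 4 → ℤ :=
  ![x 0 * w 0 - x 1 * w 1 - x 2 * w 2 - x 3 * w 3,
    x 0 * w 1 + x 1 * w 0 + x 2 * w 3 - x 3 * w 2,
    x 0 * w 2 - x 1 * w 3 + x 2 * w 0 + x 3 * w 1,
    x 0 * w 3 + x 1 * w 2 - x 2 * w 1 + x 3 * w 0]

def nrm (x : Fin 4 → ℤ) : ℤ := x 0 ^ 2 + x 1 ^ 2 + x 2 ^ 2 + x 3 ^ 2

def samePar (w : Fin 4 → ℤ) : Prop :=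
  w 1 % 2 = w 0 % 2 ∧ w 2 % 2 = w 0 % 2 ∧ w 3 % 2 = w 0 % 2

def cj (w : Fin 4 → ℤ) : Fin 4 → ℤ := ![w 0, -w 1, -w 2, -w 3]

def em : Fin 4 → ℤ := ![1, -1, 0, 0]
def ep : Fin 4 → ℤ := ![1, 1, 0, 0]

lemma qmul0 (x w : Fin 4 → ℤ) :
    qmul x w 0 = x 0 * w 0 - x 1 * w 1 - x 2 * w 2 - x 3 * w 3 := rfl
lemma qmul1 (x w : Fin 4 → ℤ) :
    qmul x w 1 = x 0 * w 1 + x 1 * w 0 + x 2 * w 3 - x 3 * w 2 := rfl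
lemma qmul2 (x w : Fin 4 → ℤ) :
    qmul x w 2 = x 0 * w 2 - x 1 * w 3 + x 2 * w 0 + x 3 * w 1 := rfl
lemma qmul3 (x w : Fin 4 → ℤ) :
    qmul x w 3 = x 0 * w 3 + x 1 * w 2 - x 2 * w 1 + x 3 * w 0 := rfl

lemma nrm_em : nrm em = 2 := by decide
lemma nrm_ep : nrm ep = 2 := by decide

lemma nrm_cj (w : Fin 4 → ℤ) : nrm (cj w) = nrm w := by simp [nrm, cj]

lemma nrm_qmul (x w : Fin 4 → ℤ) : nrm (qmul x w) = nrm x * nrm w := by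
  simp only [nrm, qmul0, qmul1, qmul2, qmul3]
  ring

lemma nrm_smul (c : ℤ) (x : Fin 4 → ℤ) : nrm (c • x) = c ^ 2 * nrm x := by
  simp only [nrm, Pi.smul_apply, smul_eq_mul]
  ring

lemma qmul_assoc (x y z : Fin 4 → ℤ) : qmul (qmul x y) z = qmul x (qmul y z) := by
  funext i
  fin_cases i <;>
    simp only [qmul, Matrix.cons_val_zero, Matrix.cons_val_one, Matrix.head_cons,
      Matrix.cons_val_two, Matrix.tail_cons, Matrix.cons_val_three] <;> ring

lemma qmul_smul (c : ℤ) (x y : Fin 4 → ℤ) : qmul x (c • y) = c • qmul x y := by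
  funext i
  fin_cases i <;> simp [qmul] <;> ring

lemma smul_qmul (c : ℤ) (x y : Fin 4 → ℤ) : qmul (c • x) y = c • qmul x y := by
  funext i
  fin_cases i <;> simp [qmul] <;> ring

lemma qmul_diag (x : Fin 4 → ℤ) (c : ℤ) : qmul x ![c, 0, 0, 0] = c • x := by
  funext i
  fin_cases i <;> simp [qmul] <;> ring

lemma qmul_diag_left (c : ℤ) (w : Fin 4 → ℤ) : qmul ![c, 0, 0, 0] w = c • w := by
  funext i
  fin_cases i <;> simp [qmul] <;> ring

lemma mul_cj (w : Fin 4 → ℤ) : qmul w (cj w) = ![nrm w, 0, 0, 0] := by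
  funext i
  fin_cases i <;> simp [qmul, cj, nrm] <;> ring

lemma qmul_em_ep : qmul em ep = ![2, 0, 0, 0] := by decide

lemma two_smul_inj (a b : Fin 4 → ℤ) (h : (2:ℤ) • a = (2:ℤ) • b) : a = b := by
  funext i
  have := congrFun h i
  simp only [Pi.smul_apply, smul_eq_mul] at this
  omega

/-! ### Parity lemmas -/

lemma sq_mod_two (a : ℤ) : a ^ 2 % 2 = a % 2 := by
  rcases Int.even_or_odd a with ⟨k, rfl⟩ | ⟨k, rfl⟩
  · rw [show (k + k) ^ 2 = 2 * (2 * k ^ 2) from by ring]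
    generalize 2 * k ^ 2 = t
    omega
  · rw [show (2 * k + 1) ^ 2 = 2 * (2 * k ^ 2 + 2 * k) + 1 from by ring]
    generalize 2 * k ^ 2 + 2 * k = t
    omega

lemma sq_mod_four (a : ℤ) : a ^ 2 % 4 = a % 2 := by
  rcases Int.even_or_odd a with ⟨k, rfl⟩ | ⟨k, rfl⟩
  · rw [show (k + k) ^ 2 = 4 * k ^ 2 from by ring]
    generalize k ^ 2 = t
    omega
  · rw [show (2 * k + 1) ^ 2 = 4 * (k ^ 2 + k) + 1 from by ring]
    generalize k ^ 2 + k = t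
    omega

lemma sum_parity (x : Fin 4 → ℤ) (h : nrm x % 2 = 0) :
    (x 0 + x 1 + x 2 + x 3) % 2 = 0 := by
  have h0 := sq_mod_two (x 0); have h1 := sq_mod_two (x 1)
  have h2 := sq_mod_two (x 2); have h3 := sq_mod_two (x 3)
  unfold nrm at h
  set a := x 0 ^ 2; set b := x 1 ^ 2; set c := x 2 ^ 2; set d := x 3 ^ 2
  omega

lemma samePar_of_nrm_four (w : Fin 4 → ℤ) (h : nrm w = 4) : samePar w := by
  have h0 := sq_mod_four (w 0); have h1 := sq_mod_four (w 1)
  have h2 := sq_mod_four (w 2); have h3 := sq_mod_four (w 3)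
  unfold nrm at h; unfold samePar
  set a := w 0 ^ 2; set b := w 1 ^ 2; set c := w 2 ^ 2; set d := w 3 ^ 2
  have ha : 0 ≤ a := sq_nonneg _
  have hb : 0 ≤ b := sq_nonneg _
  have hc : 0 ≤ c := sq_nonneg _
  have hd : 0 ≤ d := sq_nonneg _
  omega

lemma mem_intShell (n : ℕ) (x : Fin 4 → ℤ) : x ∈ intShell 4 n ↔ nrm x = n := by
  simp only [intShell, Finset.mem_filter, Finset.mem_Icc, Pi.le_def]
  constructor
  · rintro ⟨-, h⟩; rw [nrm, ← Fin.sum_univ_four (fun i => x i ^ 2)]; exact h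
  · intro h
    have hsum : ∑ i, x i ^ 2 = (n : ℤ) := by
      rw [Fin.sum_univ_four (fun i => x i ^ 2)]; exact h
    refine ⟨⟨?_, ?_⟩, hsum⟩ <;> intro i <;>
    · have h1 : x i ^ 2 ≤ (n : ℤ) := by
        rw [← hsum]
        exact Finset.single_le_sum (f := fun j => x j ^ 2) (fun j _ => sq_nonneg _)
          (Finset.mem_univ i)
      nlinarith [sq_nonneg (x i + 1), sq_nonneg (x i - 1)]

/-! ### Divisibility of products -/

private lemma zmod_helper1 (a b c d t0 t1 t2 t3 : ZMod 2)
    (hs : a + b + c + d = 0) (h1 : t1 = t0) (h2 : t2 = t0) (h3 : t3 = t0) :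
    a * t0 - b * t1 - c * t2 - d * t3 = 0 ∧
    a * t1 + b * t0 + c * t3 - d * t2 = 0 ∧
    a * t2 - b * t3 + c * t0 + d * t1 = 0 ∧
    a * t3 + b * t2 - c * t1 + d * t0 = 0 := by
  revert hs h1 h2 h3; revert a b c d t0 t1 t2 t3; decide

private lemma zmod_helper2 (a b c d t0 t1 t2 t3 : ZMod 2)
    (hb : b = a) (hc : c = a) (hd : d = a)
    (h1 : t1 = t0) (h2 : t2 = t0) (h3 : t3 = t0) :
    a * t0 - b * t1 - c * t2 - d * t3 = 0 ∧
    a * t1 + b * t0 + c * t3 - d * t2 = 0 ∧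
    a * t2 - b * t3 + c * t0 + d * t1 = 0 ∧
    a * t3 + b * t2 - c * t1 + d * t0 = 0 := by
  revert hb hc hd h1 h2 h3; revert a b c d t0 t1 t2 t3; decide

lemma castZMod2_eq_of_mod (u v : ℤ) (h : u % 2 = v % 2) : (u : ZMod 2) = (v : ZMod 2) := by
  have hd : (2 : ℤ) ∣ (u - v) := by omega
  have h0 : ((u - v : ℤ) : ZMod 2) = 0 := by
    rw [ZMod.intCast_zmod_eq_zero_iff_dvd]; exact_mod_cast hd
  push_cast at h0
  exact sub_eq_zero.mp h0

private lemma key_dvd : ∀ u : ℤ, ((u : ZMod 2) = 0) → 2 ∣ u := fun u hu => by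
  exact_mod_cast (ZMod.intCast_zmod_eq_zero_iff_dvd u 2).mp hu

lemma even_qmul_of (x w : Fin 4 → ℤ) (hx : (x 0 + x 1 + x 2 + x 3) % 2 = 0)
    (hw : samePar w) : ∀ i, 2 ∣ qmul x w i := by
  have hs : ((x 0 : ZMod 2) + x 1 + x 2 + x 3) = 0 := by
    have : ((x 0 + x 1 + x 2 + x 3 : ℤ) : ZMod 2) = 0 := by
      rw [ZMod.intCast_zmod_eq_zero_iff_dvd]
      exact_mod_cast (by omega : (2:ℤ) ∣ (x 0 + x 1 + x 2 + x 3))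
    push_cast at this; exact this
  have h1 := castZMod2_eq_of_mod _ _ hw.1
  have h2 := castZMod2_eq_of_mod _ _ hw.2.1
  have h3 := castZMod2_eq_of_mod _ _ hw.2.2
  obtain ⟨g0, g1, g2, g3⟩ := zmod_helper1 (x 0 : ZMod 2) (x 1) (x 2) (x 3)
    (w 0 : ZMod 2) (w 1) (w 2) (w 3) hs h1 h2 h3
  intro i
  have d0 : 2 ∣ qmul x w 0 := key_dvd _ (by
    show ((x 0 * w 0 - x 1 * w 1 - x 2 * w 2 - x 3 * w 3 : ℤ) : ZMod 2) = 0
    push_cast; exact g0)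
  have d1 : 2 ∣ qmul x w 1 := key_dvd _ (by
    show ((x 0 * w 1 + x 1 * w 0 + x 2 * w 3 - x 3 * w 2 : ℤ) : ZMod 2) = 0
    push_cast; exact g1)
  have d2 : 2 ∣ qmul x w 2 := key_dvd _ (by
    show ((x 0 * w 2 - x 1 * w 3 + x 2 * w 0 + x 3 * w 1 : ℤ) : ZMod 2) = 0
    push_cast; exact g2)
  have d3 : 2 ∣ qmul x w 3 := key_dvd _ (by
    show ((x 0 * w 3 + x 1 * w 2 - x 2 * w 1 + x 3 * w 0 : ℤ) : ZMod 2) = 0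
    push_cast; exact g3)
  fin_cases i
  · exact d0
  · exact d1
  · exact d2
  · exact d3

lemma even_qmul_of' (x w : Fin 4 → ℤ) (hx : samePar x) (hw : samePar w) :
    ∀ i, 2 ∣ qmul x w i := by
  have h1 := castZMod2_eq_of_mod _ _ hx.1
  have h2 := castZMod2_eq_of_mod _ _ hx.2.1
  have h3 := castZMod2_eq_of_mod _ _ hx.2.2
  have k1 := castZMod2_eq_of_mod _ _ hw.1
  have k2 := castZMod2_eq_of_mod _ _ hw.2.1
  have k3 := castZMod2_eq_of_mod _ _ hw.2.2
  obtain ⟨g0, g1, g2, g3⟩ := zmod_helper2 (x 0 : ZMod 2) (x 1) (x 2) (x 3)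
    (w 0 : ZMod 2) (w 1) (w 2) (w 3) h1 h2 h3 k1 k2 k3
  intro i
  have d0 : 2 ∣ qmul x w 0 := key_dvd _ (by
    show ((x 0 * w 0 - x 1 * w 1 - x 2 * w 2 - x 3 * w 3 : ℤ) : ZMod 2) = 0
    push_cast; exact g0)
  have d1 : 2 ∣ qmul x w 1 := key_dvd _ (by
    show ((x 0 * w 1 + x 1 * w 0 + x 2 * w 3 - x 3 * w 2 : ℤ) : ZMod 2) = 0
    push_cast; exact g1)
  have d2 : 2 ∣ qmul x w 2 := key_dvd _ (by
    show ((x 0 * w 2 - x 1 * w 3 + x 2 * w 0 + x 3 * w 1 : ℤ) : ZMod 2) = 0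
    push_cast; exact g2)
  have d3 : 2 ∣ qmul x w 3 := key_dvd _ (by
    show ((x 0 * w 3 + x 1 * w 2 - x 2 * w 1 + x 3 * w 0 : ℤ) : ZMod 2) = 0
    push_cast; exact g3)
  fin_cases i
  · exact d0
  · exact d1
  · exact d2
  · exact d3

/-! ### The equivalence relation -/

def rel (x y : Fin 4 → ℤ) : Prop := ∃ w ∈ intShell 4 4, (2:ℤ) • y = qmul x w

lemma rel_refl (x : Fin 4 → ℤ) : rel x x := by
  refine ⟨![2, 0, 0, 0], ?_, (qmul_diag x 2).symm⟩
  rw [mem_intShell]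
  decide

lemma rel_symm {x y : Fin 4 → ℤ} (h : rel x y) : rel y x := by
  obtain ⟨w, hw, he⟩ := h
  rw [mem_intShell] at hw
  have hw4 : nrm w = 4 := by exact_mod_cast hw
  refine ⟨cj w, by rw [mem_intShell, nrm_cj, hw4]; norm_num, ?_⟩
  have h4 : qmul (qmul x w) (cj w) = (4:ℤ) • x := by
    rw [qmul_assoc, mul_cj, qmul_diag, hw4]
  have hcong : qmul ((2:ℤ) • y) (cj w) = qmul (qmul x w) (cj w) := by rw [he]
  rw [smul_qmul, h4] at hcong
  refine (two_smul_inj _ _ ?_).symm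
  rw [hcong, smul_smul]
  norm_num

lemma rel_trans {x y z : Fin 4 → ℤ} (hxy : rel x y) (hyz : rel y z) : rel x z := by
  obtain ⟨w, hw, he⟩ := hxy
  obtain ⟨w', hw', he'⟩ := hyz
  rw [mem_intShell] at hw hw'
  have hnw : nrm w = 4 := by exact_mod_cast hw
  have hnw' : nrm w' = 4 := by exact_mod_cast hw'
  have hdvd := even_qmul_of' w w' (samePar_of_nrm_four w hnw) (samePar_of_nrm_four w' hnw')
  set u : Fin 4 → ℤ := fun i => qmul w w' i / 2 with hu
  have h2u : (2:ℤ) • u = qmul w w' := by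
    funext i
    simpa using Int.mul_ediv_cancel' (hdvd i)
  have hnu : nrm u = 4 := by
    have h16 : nrm ((2:ℤ) • u) = nrm w * nrm w' := by rw [h2u, nrm_qmul]
    rw [nrm_smul, hnw, hnw'] at h16
    linarith
  refine ⟨u, by rw [mem_intShell, hnu]; norm_num, ?_⟩
  refine two_smul_inj _ _ ?_
  calc (2:ℤ) • (2:ℤ) • z = (2:ℤ) • qmul y w' := by rw [he']
    _ = qmul ((2:ℤ) • y) w' := (smul_qmul _ _ _).symm
    _ = qmul (qmul x w) w' := by rw [he]
    _ = qmul x (qmul w w') := qmul_assoc _ _ _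
    _ = qmul x ((2:ℤ) • u) := by rw [h2u]
    _ = (2:ℤ) • qmul x u := qmul_smul _ _ _

instance relSetoid (mm : ℕ) : Setoid {x : Fin 4 → ℤ // x ∈ intShell 4 (2 * mm)} :=
  ⟨fun a b => rel a.1 b.1, ⟨fun a => rel_refl a.1, rel_symm, rel_trans⟩⟩

noncomputable instance (mm : ℕ) : Fintype (Quotient (relSetoid mm)) :=
  @Quotient.fintype _ _ (relSetoid mm) (fun _ _ => Classical.dec _)

lemma out_nrm (mm : ℕ) (c : Quotient (relSetoid mm)) : nrm (c.out.1) = 2 * mm := by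
  have h := c.out.2
  rw [mem_intShell] at h
  exact_mod_cast h

/-! ### Orbit points -/

lemma orb_point {mm : ℕ} {r : Fin 4 → ℤ} (hr : nrm r = 2 * mm) {v : Fin 4 → ℤ}
    (hv : v ∈ intShell 4 2) :
    ∃ z : Fin 4 → ℤ, z ∈ intShell 4 (2 * mm) ∧ rel r z ∧
      (2:ℤ) • z = qmul (qmul r em) v := by
  rw [mem_intShell] at hv
  have hnv : nrm v = 2 := by exact_mod_cast hv
  set w : Fin 4 → ℤ := qmul em v with hwdef
  have hnw : nrm w = 4 := by rw [hwdef, nrm_qmul, nrm_em, hnv]; norm_num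
  have hsum : (r 0 + r 1 + r 2 + r 3) % 2 = 0 := sum_parity r (by omega)
  have hdvd := even_qmul_of r w hsum (samePar_of_nrm_four w hnw)
  set z : Fin 4 → ℤ := fun i => qmul r w i / 2 with hz
  have h2z : (2:ℤ) • z = qmul r w := by
    funext i
    simpa using Int.mul_ediv_cancel' (hdvd i)
  have hnz : nrm z = 2 * mm := by
    have h8 : nrm ((2:ℤ) • z) = nrm r * nrm w := by rw [h2z, nrm_qmul]
    rw [nrm_smul, hr, hnw] at h8
    linarith
  refine ⟨z, by rw [mem_intShell]; exact_mod_cast hnz,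
    ⟨w, by rw [mem_intShell]; exact_mod_cast hnw, h2z⟩, ?_⟩
  rw [qmul_assoc, ← hwdef, h2z]

lemma orb_point' {r z : Fin 4 → ℤ} (h : rel r z) :
    ∃ v ∈ intShell 4 2, (2:ℤ) • z = qmul (qmul r em) v := by
  obtain ⟨w, hw, he⟩ := h
  rw [mem_intShell] at hw
  have hnw : nrm w = 4 := by exact_mod_cast hw
  have hdvd := even_qmul_of ep w (by decide) (samePar_of_nrm_four w hnw)
  set v : Fin 4 → ℤ := fun i => qmul ep w i / 2 with hvdef
  have h2v : (2:ℤ) • v = qmul ep w := by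
    funext i
    simpa using Int.mul_ediv_cancel' (hdvd i)
  have hnv : nrm v = 2 := by
    have h8 : nrm ((2:ℤ) • v) = nrm ep * nrm w := by rw [h2v, nrm_qmul]
    rw [nrm_smul, nrm_ep, hnw] at h8
    linarith
  have hemv : qmul em v = w := by
    refine two_smul_inj _ _ ?_
    calc (2:ℤ) • qmul em v = qmul em ((2:ℤ) • v) := (qmul_smul _ _ _).symm
      _ = qmul em (qmul ep w) := by rw [h2v]
      _ = qmul (qmul em ep) w := (qmul_assoc _ _ _).symm
      _ = qmul ![2,0,0,0] w := by rw [qmul_em_ep]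
      _ = (2:ℤ) • w := qmul_diag_left _ _
  refine ⟨v, by rw [mem_intShell]; exact_mod_cast hnv, ?_⟩
  rw [qmul_assoc, hemv, he]

end D4aux

namespace D4aux

open Quaternion

/-! ### Real quaternions -/

/-- The real quaternion attached to an integer vector. -/
def Qh (y : Fin 4 → ℤ) : ℍ := ⟨(y 0 : ℝ), y 1, y 2, y 3⟩

@[simp] lemma Qh_re (y : Fin 4 → ℤ) : (Qh y).re = (y 0 : ℝ) := rfl
@[simp] lemma Qh_imI (y : Fin 4 → ℤ) : (Qh y).imI = (y 1 : ℝ) := rfl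
@[simp] lemma Qh_imJ (y : Fin 4 → ℤ) : (Qh y).imJ = (y 2 : ℝ) := rfl
@[simp] lemma Qh_imK (y : Fin 4 → ℤ) : (Qh y).imK = (y 3 : ℝ) := rfl

lemma Qh_mul (a b : Fin 4 → ℤ) : Qh (qmul a b) = Qh a * Qh b := by
  ext <;>
    simp only [Qh_re, Qh_imI, Qh_imJ, Qh_imK, re_mul, imI_mul, imJ_mul, imK_mul,
      qmul0, qmul1, qmul2, qmul3] <;>
    push_cast <;> ring

lemma norm_Qh (y : Fin 4 → ℤ) : ‖Qh y‖ = Real.sqrt ((nrm y : ℝ)) := by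
  rw [← Real.sqrt_mul_self (norm_nonneg (Qh y)), ← Quaternion.normSq_eq_norm_mul_self,
    Quaternion.normSq_def']
  congr 1
  simp only [Qh_re, Qh_imI, Qh_imJ, Qh_imK, nrm]
  push_cast
  ring

/-- The standard linear isometry between `EuclideanSpace ℝ (Fin 4)` and the quaternions. -/
noncomputable def eIso : EuclideanSpace ℝ (Fin 4) ≃ₗᵢ[ℝ] ℍ :=
  Quaternion.linearIsometryEquivTuple.symm

lemma eIso_apply (x : EuclideanSpace ℝ (Fin 4)) : eIso x = ⟨x 0, x 1, x 2, x 3⟩ := by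
  simp [eIso]
  rfl

lemma eIso_symm_apply (q : ℍ) (i : Fin 4) : eIso.symm q i = ![q.1, q.2, q.3, q.4] i := by
  simp [eIso, Quaternion.linearIsometryEquivTuple]
  rfl

/-- Left multiplication by a unit quaternion, as a linear isometry equivalence. -/
noncomputable def lmulIso (q : ℍ) (hq : ‖q‖ = 1) : ℍ ≃ₗᵢ[ℝ] ℍ :=
  have hq0 : q ≠ 0 := by intro h; rw [h] at hq; simp at hq
  { (LinearEquiv.ofLinear (LinearMap.mulLeft ℝ q) (LinearMap.mulLeft ℝ q⁻¹)
      (LinearMap.ext fun x => by simp [← mul_assoc, mul_inv_cancel₀ hq0])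
      (LinearMap.ext fun x => by simp [← mul_assoc, inv_mul_cancel₀ hq0]) : ℍ ≃ₗ[ℝ] ℍ) with
    norm_map' := fun x => by
      show ‖q * x‖ = ‖x‖
      rw [norm_mul, hq, one_mul] }

lemma lmulIso_apply (q : ℍ) (hq : ‖q‖ = 1) (x : ℍ) : lmulIso q hq x = q * x := rfl

/-! ### The isometries -/

noncomputable def q0 (mm : ℕ) (r : Fin 4 → ℤ) : ℍ :=
  (Real.sqrt (4 * mm))⁻¹ • Qh (qmul r em)

lemma q0_norm {mm : ℕ} (hm : 0 < mm) {r : Fin 4 → ℤ} (hr : nrm r = 2 * mm) :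
    ‖q0 mm r‖ = 1 := by
  have hmpos : (0:ℝ) < mm := by exact_mod_cast hm
  rw [q0, norm_smul, norm_Qh, nrm_qmul, hr, nrm_em]
  rw [Real.norm_eq_abs, abs_of_nonneg (inv_nonneg.mpr (Real.sqrt_nonneg _))]
  rw [show ((2 * (mm:ℤ) * 2 : ℤ) : ℝ) = 4 * (mm:ℝ) from by push_cast; ring]
  rw [inv_mul_cancel₀]
  exact Real.sqrt_ne_zero'.mpr (by linarith)

noncomputable def sigma0 (mm : ℕ) (hm : 0 < mm) (r : Fin 4 → ℤ) (hr : nrm r = 2 * mm) :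
    EuclideanSpace ℝ (Fin 4) ≃ₗᵢ[ℝ] EuclideanSpace ℝ (Fin 4) :=
  eIso.trans ((lmulIso (q0 mm r) (q0_norm hm hr)).trans eIso.symm)

lemma sqrt_scalar (mm : ℕ) :
    Real.sqrt (4 * mm) * Real.sqrt 2 = 2 * Real.sqrt (2 * mm) := by
  rw [show (4 * (mm:ℝ)) = 2 * (2 * mm) from by ring,
    Real.sqrt_mul (by norm_num : (0:ℝ) ≤ 2)]
  calc Real.sqrt 2 * Real.sqrt (2 * mm) * Real.sqrt 2
      = (Real.sqrt 2 * Real.sqrt 2) * Real.sqrt (2 * mm) := by ring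
    _ = 2 * Real.sqrt (2 * mm) := by
        rw [Real.mul_self_sqrt (by norm_num : (0:ℝ) ≤ 2)]

lemma sigma0_coord (mm : ℕ) (hm : 0 < mm) (r : Fin 4 → ℤ) (hr : nrm r = 2 * mm)
    (v : Fin 4 → ℤ) (x : EuclideanSpace ℝ (Fin 4))
    (hx : ∀ i, x i = (v i : ℝ) / Real.sqrt 2) (i : Fin 4) :
    sigma0 mm hm r hr x i = (qmul (qmul r em) v i : ℝ) / (2 * Real.sqrt (2 * mm)) := by
  have hex : eIso x = (Real.sqrt 2)⁻¹ • Qh v := by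
    rw [eIso_apply]
    ext <;> simp [hx, div_eq_inv_mul]
  have key : q0 mm r * eIso x =
      (2 * Real.sqrt (2 * mm))⁻¹ • Qh (qmul (qmul r em) v) := by
    rw [hex, q0, smul_mul_smul_comm, ← Qh_mul, ← mul_inv, sqrt_scalar]
  have happ : sigma0 mm hm r hr x = eIso.symm (q0 mm r * eIso x) := rfl
  rw [happ, key, eIso_symm_apply]
  fin_cases i <;>
    simp [Qh, div_eq_inv_mul, Quaternion.re_smul, Quaternion.imI_smul,
      Quaternion.imJ_smul, Quaternion.imK_smul, smul_eq_mul] <;>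
    rfl

/-! ### Orbits -/

def orbSet (mm : ℕ) (r : Fin 4 → ℤ) : Set (EuclideanSpace ℝ (Fin 4)) :=
  {x | ∃ v ∈ intShell 4 2, ∀ i, x i = (qmul (qmul r em) v i : ℝ) / (2 * Real.sqrt (2 * mm))}

lemma sig_image (mm : ℕ) (hm : 0 < mm) (r : Fin 4 → ℤ) (hr : nrm r = 2 * mm) :
    sigma0 mm hm r hr '' normShell 4 2 = orbSet mm r := by
  apply Set.Subset.antisymm
  · rintro x ⟨x0, ⟨v, hv, hxv⟩, rfl⟩
    refine ⟨v, hv, fun i => ?_⟩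
    exact sigma0_coord mm hm r hr v x0
      (fun j => by rw [hxv j]; norm_num) i
  · rintro x ⟨v, hv, hx⟩
    refine ⟨(WithLp.equiv 2 _).symm (fun i => (v i : ℝ) / Real.sqrt 2),
      ⟨v, hv, fun i => by rw [WithLp.equiv_symm_apply, PiLp.toLp_apply]; norm_num⟩, ?_⟩
    ext i
    rw [hx i, sigma0_coord mm hm r hr v _
      (fun j => by rw [WithLp.equiv_symm_apply, PiLp.toLp_apply]) i]

end D4aux

open D4aux

/-- Every shell of the `D₄` lattice decomposes into orthogonal
transformations of the `D₄` root system: for every `m ≥ 1` the normalized shell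
`(1/√(2m))·(D₄)_{2m} ⊆ S³` is a disjoint union of finitely many images
`σ₁((1/√2)(D₄)₂), …, σ_k((1/√2)(D₄)₂)` under linear isometries `σⱼ` of `ℝ⁴`. -/
theorem D4_shell_decomposition (m : ℕ) (hm : 0 < m) :
    ∃ (k : ℕ) (σ : Fin k → (EuclideanSpace ℝ (Fin 4) ≃ₗᵢ[ℝ] EuclideanSpace ℝ (Fin 4))),
      (normShell 4 (2 * m) = ⋃ j : Fin k, σ j '' normShell 4 2) ∧
      (∀ j j' : Fin k, j ≠ j' →
        Disjoint (σ j '' normShell 4 2) (σ j' '' normShell 4 2)) := by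
  classical
  set Q := Quotient (relSetoid m) with hQ
  let eq : Q ≃ Fin (Fintype.card Q) := Fintype.equivFin Q
  have hsqrt_pos : (0:ℝ) < Real.sqrt (2 * m) := by
    apply Real.sqrt_pos.mpr
    have : (0:ℝ) < m := by exact_mod_cast hm
    linarith
  have hcast : ((2 * m : ℕ) : ℝ) = 2 * (m : ℝ) := by push_cast; ring
  refine ⟨Fintype.card Q, fun j => sigma0 m hm ((eq.symm j).out).1 (out_nrm m _), ?_, ?_⟩
  · apply Set.Subset.antisymm
    · rintro x ⟨y, hy, hxy⟩
      refine Set.mem_iUnion.mpr ⟨eq ⟦⟨y, hy⟩⟧, ?_⟩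
      rw [sig_image]
      have hrel : rel ((eq.symm (eq ⟦⟨y, hy⟩⟧)).out).1 y := by
        have h1 : eq.symm (eq ⟦⟨y, hy⟩⟧) = ⟦⟨y, hy⟩⟧ := eq.symm_apply_apply _
        have h2 : (⟦(⟦⟨y, hy⟩⟧ : Q).out⟧ : Q) = ⟦⟨y, hy⟩⟧ := Quotient.out_eq _
        have h3 := Quotient.exact h2
        rw [h1]
        exact h3
      obtain ⟨v, hv, hzv⟩ := orb_point' hrel
      refine ⟨v, hv, fun i => ?_⟩
      have hcoord := congrFun hzv i
      simp only [Pi.smul_apply, smul_eq_mul] at hcoord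
      rw [hxy i, ← hcoord]
      push_cast
      rw [mul_div_mul_left _ _ (two_ne_zero)]
    · intro x hx
      obtain ⟨j, hj⟩ := Set.mem_iUnion.mp hx
      rw [sig_image] at hj
      obtain ⟨v, hv, hxv⟩ := hj
      obtain ⟨z, hz, hrelz, h2z⟩ := orb_point (out_nrm m (eq.symm j)) hv
      refine ⟨z, hz, fun i => ?_⟩
      have hcoord := congrFun h2z i
      simp only [Pi.smul_apply, smul_eq_mul] at hcoord
      rw [hxv i, ← hcoord]
      push_cast
      rw [mul_div_mul_left _ _ (two_ne_zero)]
  · intro j j' hne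
    rw [Set.disjoint_left]
    intro x hxj hxj'
    rw [sig_image] at hxj hxj'
    obtain ⟨v, hv, hxv⟩ := hxj
    obtain ⟨v', hv', hxv'⟩ := hxj'
    obtain ⟨z, hz, hrelz, h2z⟩ := orb_point (out_nrm m (eq.symm j)) hv
    obtain ⟨z', hz', hrelz', h2z'⟩ := orb_point (out_nrm m (eq.symm j')) hv'
    have hzz : z = z' := by
      funext i
      have e1 := (hxv i).symm.trans (hxv' i)
      have c1 := congrFun h2z i
      have c2 := congrFun h2z' i
      simp only [Pi.smul_apply, smul_eq_mul] at c1 c2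
      rw [← c1, ← c2] at e1
      have h2s : (2 * Real.sqrt (2 * m) : ℝ) ≠ 0 := by positivity
      have hcast2 : ((2 * z i : ℤ) : ℝ) = ((2 * z' i : ℤ) : ℝ) :=
        (div_left_inj' h2s).mp e1
      have := Int.cast_injective hcast2
      omega
    apply hne
    apply eq.symm.injective
    have hj1 : eq.symm j = (⟦⟨z, hz⟩⟧ : Q) := by
      rw [← Quotient.out_eq (eq.symm j)]
      exact Quotient.sound hrelz
    have hj2 : eq.symm j' = (⟦⟨z', hz'⟩⟧ : Q) := by
      rw [← Quotient.out_eq (eq.symm j')]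
      exact Quotient.sound hrelz'
    subst hzz
    rw [hj1, hj2]
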